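/- Let 𝒪 be an order ideal in P = K[x_0,…,x_n] and let G be a homogeneous ∂𝒪-basis of a homogeneous ideal J ⊆ P. Then J_d = (G)_d for every d ≥ 0, and J = (G). -/

import Mathlib

open MvPolynomial

namespace Border

/-- A term of `K[x_0, …, x_n]`, identified with its exponent vector. -/
abbrev Term (n : ℕ) := Fin (n + 1) →₀ ℕ

variable {n : ℕ}

/-- The (standard) degree of a term. -/
def tdeg (m : Term n) : ℕ := ∑ i, m i

/-- An order ideal: a nonempty set of terms closed under divisors. -/
def IsOrderIdeal (O : Set (Term n)) : Prop :=
  O.Nonempty ∧ ∀ τ ∈ O, ∀ τ' : Term n, τ' ≤ τ → τ' ∈ O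

/-- The border `∂𝒪 = (x_0·𝒪 ∪ ⋯ ∪ x_n·𝒪) ∖ 𝒪`. -/
def border (O : Set (Term n)) : Set (Term n) :=
  {σ | σ ∉ O ∧ ∃ r : Fin (n + 1), ∃ τ ∈ O, σ = τ + Finsupp.single r 1}

/-- Multiplicative set of a border term `σ`, with respect to a labeling `lab` of the border:
`𝒯_σ = {η : σ' ∤ η·σ for every border term σ' with a larger label}`. -/
def mulSet (O : Set (Term n)) (lab : Term n → ℕ) (σ : Term n) : Set (Term n) :=
  {η | ∀ σ' ∈ border O, lab σ < lab σ' → ¬ σ' ≤ η + σ}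

/-- The cone `C(σ) = {η·σ : η ∈ 𝒯_σ}`. -/
def cone (O : Set (Term n)) (lab : Term n → ℕ) (σ : Term n) : Set (Term n) :=
  (fun η => η + σ) '' mulSet O lab σ

/-- A labeling of the border which is injective and ordered increasingly by degree. -/
def DegOrderedLabeling (O : Set (Term n)) (lab : Term n → ℕ) : Prop :=
  Set.InjOn lab (border O) ∧
    ∀ σ ∈ border O, ∀ σ' ∈ border O, lab σ < lab σ' → tdeg σ ≤ tdeg σ'

/-- Iterated border closures: `∂⁰𝒪 := 𝒪`, and the `(k+1)`-st closure adds the border. -/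
def borderClosure (O : Set (Term n)) : ℕ → Set (Term n)
  | 0 => O
  | k + 1 => borderClosure O k ∪ border (borderClosure O k)

/-- The index `ind_𝒪(τ)`: the least `k` with `τ ∈ ∂^k𝒪`. -/
noncomputable def ind (O : Set (Term n)) (τ : Term n) : ℕ :=
  sInf {k | τ ∈ borderClosure O k}

/-- Degree-`d` part of a set of terms. -/
def Od (O : Set (Term n)) (d : ℕ) : Set (Term n) := {τ | τ ∈ O ∧ tdeg τ = d}

variable {K : Type*} [Field K]

/-- The index of a nonzero polynomial: the maximal index of a term of its support. -/
noncomputable def indP (O : Set (Term n)) (f : MvPolynomial (Fin (n + 1)) K) : ℕ :=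
  f.support.sup (ind O)

/-- A homogeneous `∂𝒪`-prebasis: a family `g σ = σ - Σ_{τ ∈ 𝒪_{deg σ}} c_{στ} τ`. -/
def IsPrebasis (O : Set (Term n)) (g : Term n → MvPolynomial (Fin (n + 1)) K) : Prop :=
  ∀ σ ∈ border O, ∀ τ ∈ (monomial σ (1 : K) - g σ).support, τ ∈ O ∧ tdeg τ = tdeg σ

/-- The set of border reductors `𝒯G = {η·g_σ : σ ∈ ∂𝒪, η ∈ 𝒯_σ}`. -/
def reductors (O : Set (Term n)) (lab : Term n → ℕ)
    (g : Term n → MvPolynomial (Fin (n + 1)) K) : Set (MvPolynomial (Fin (n + 1)) K) :=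
  {p | ∃ σ ∈ border O, ∃ η ∈ mulSet O lab σ, p = monomial η (1 : K) * g σ}

/-- The degree-`d` border reductors `𝒯G_d = 𝒯G ∩ P_d`. -/
def reductorsDeg (O : Set (Term n)) (lab : Term n → ℕ)
    (g : Term n → MvPolynomial (Fin (n + 1)) K) (d : ℕ) :
    Set (MvPolynomial (Fin (n + 1)) K) :=
  reductors O lab g ∩ {p | p.IsHomogeneous d}

/-- One step of the border reduction relation `→_G`. -/
def Step (O : Set (Term n)) (lab : Term n → ℕ)
    (g : Term n → MvPolynomial (Fin (n + 1)) K)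
    (f h : MvPolynomial (Fin (n + 1)) K) : Prop :=
  ∃ σ ∈ border O, ∃ η ∈ mulSet O lab σ, η + σ ∈ f.support ∧
    h = f - f.coeff (η + σ) • (monomial η (1 : K) * g σ)

/-- The border reduction relation `→⁺_G` (finitely many, possibly zero, steps). -/
def Reduces (O : Set (Term n)) (lab : Term n → ℕ)
    (g : Term n → MvPolynomial (Fin (n + 1)) K) :
    MvPolynomial (Fin (n + 1)) K → MvPolynomial (Fin (n + 1)) K → Prop :=
  Relation.ReflTransGen (Step O lab g)

/-- The `K`-vector space spanned by a set of terms. -/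
noncomputable def spanTerms (K : Type*) [Field K] (S : Set (Term n)) :
    Submodule K (MvPolynomial (Fin (n + 1)) K) :=
  Submodule.span K ((fun τ => monomial τ (1 : K)) '' S)

/-- The ideal `(G)` generated by a `∂𝒪`-prebasis. -/
noncomputable def idealG (O : Set (Term n)) (g : Term n → MvPolynomial (Fin (n + 1)) K) :
    Ideal (MvPolynomial (Fin (n + 1)) K) :=
  Ideal.span (g '' border O)

/-- The degree-`d` part `I_d` of an ideal, as a `K`-vector subspace. -/
noncomputable def degPart (I : Ideal (MvPolynomial (Fin (n + 1)) K)) (d : ℕ) :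
    Submodule K (MvPolynomial (Fin (n + 1)) K) :=
  Submodule.restrictScalars K I ⊓ homogeneousSubmodule (Fin (n + 1)) K d

/-- Homogeneous ideal. -/
def IsHomogeneousIdeal (I : Ideal (MvPolynomial (Fin (n + 1)) K)) : Prop :=
  ∀ f ∈ I, ∀ d : ℕ, homogeneousComponent d f ∈ I

/-- `G` is a homogeneous `∂𝒪`-basis of `J`: it is a prebasis contained in `J` and for every
`d` one has `P_d = J_d ⊕ ⟨𝒪_d⟩`, i.e. the residue classes of `𝒪_d` are a basis of `P_d/J_d`. -/
def IsBorderBasisOf (O : Set (Term n)) (g : Term n → MvPolynomial (Fin (n + 1)) K)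
    (J : Ideal (MvPolynomial (Fin (n + 1)) K)) : Prop :=
  IsPrebasis O g ∧ (∀ σ ∈ border O, g σ ∈ J) ∧
    ∀ d : ℕ, degPart J d ⊔ spanTerms K (Od O d) = homogeneousSubmodule (Fin (n + 1)) K d ∧
      Disjoint (degPart J d) (spanTerms K (Od O d))

/-- An `m`-lower representation of `f` by `𝒯G`: `f = Σ c_j • η_j·g_{σ_j}` with distinct
pairs `(η_j, σ_j)`, `η_j ∈ 𝒯_{σ_j}` and `ind(η_j σ_j) ≤ m`. -/
def HasLRep (O : Set (Term n)) (lab : Term n → ℕ)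
    (g : Term n → MvPolynomial (Fin (n + 1)) K)
    (f : MvPolynomial (Fin (n + 1)) K) (m : ℕ) : Prop :=
  ∃ (s : Finset (Term n × Term n)) (c : Term n × Term n → K),
    (∀ p ∈ s, p.2 ∈ border O ∧ p.1 ∈ mulSet O lab p.2 ∧ ind O (p.1 + p.2) ≤ m) ∧
    f = ∑ p ∈ s, c p • (monomial p.1 (1 : K) * g p.2)

/-- An `m`-lower representation of `f` by `𝒯G_d`. -/
def HasLRepDeg (O : Set (Term n)) (lab : Term n → ℕ)
    (g : Term n → MvPolynomial (Fin (n + 1)) K)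
    (f : MvPolynomial (Fin (n + 1)) K) (m d : ℕ) : Prop :=
  ∃ (s : Finset (Term n × Term n)) (c : Term n × Term n → K),
    (∀ p ∈ s, p.2 ∈ border O ∧ p.1 ∈ mulSet O lab p.2 ∧ ind O (p.1 + p.2) ≤ m ∧
      (monomial p.1 (1 : K) * g p.2).IsHomogeneous d) ∧
    f = ∑ p ∈ s, c p • (monomial p.1 (1 : K) * g p.2)

/-- The subtype of terms of `𝒪` of degree `d`. -/
abbrev OdSub (O : Set (Term n)) (d : ℕ) : Type _ := {τ : Term n // τ ∈ Od O d}

lemma tdeg_component_lt {d : ℕ} (m : Term n) (h : tdeg m = d) (i : Fin (n + 1)) :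
    m i < d + 1 := by
  have : m i ≤ tdeg m :=
    Finset.single_le_sum (f := fun j => m j) (fun j _ => Nat.zero_le _) (Finset.mem_univ i)
  omega

instance (O : Set (Term n)) (d : ℕ) : Finite (OdSub O d) := by
  have hinj : Function.Injective
      (fun τ : OdSub O d => fun i : Fin (n + 1) =>
        (⟨τ.1 i, tdeg_component_lt τ.1 τ.2.2 i⟩ : Fin (d + 1))) := by
    intro a b hab
    apply Subtype.ext
    apply Finsupp.ext
    intro i
    simpa using congrArg Fin.val (congrFun hab i)
  exact Finite.of_injective _ hinj

noncomputable instance (O : Set (Term n)) (d : ℕ) : Fintype (OdSub O d) :=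
  Fintype.ofFinite _

open scoped Classical in
/-- The `r`-th `d`-graded formal multiplication matrix of a prebasis `G`,
with rows indexed by `𝒪_{d+1}` and columns by `𝒪_d`. -/
noncomputable def multMatrix (O : Set (Term n))
    (g : Term n → MvPolynomial (Fin (n + 1)) K) (r : Fin (n + 1)) (d : ℕ) :
    Matrix (OdSub O (d + 1)) (OdSub O d) K :=
  Matrix.of fun τ' τ =>
    if τ.1 + Finsupp.single r 1 ∈ O then
      (if τ.1 + Finsupp.single r 1 = τ'.1 then 1 else 0)
    else (monomial (τ.1 + Finsupp.single r 1) (1 : K)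
            - g (τ.1 + Finsupp.single r 1)).coeff τ'.1

/-- The minimum degree of a border term. -/
noncomputable def minDegBorder (O : Set (Term n)) : ℕ := sInf (tdeg '' border O)

/-- The `d`-th Macaulay transformation `a^{⟨d⟩}`, computed greedily. -/
noncomputable def macaulay : ℕ → ℕ → ℕ
  | 0, _ => 0
  | d + 1, a =>
    if a = 0 then 0
    else
      Nat.choose (sSup {k | Nat.choose k (d + 1) ≤ a} + 1) (d + 2) +
        macaulay d (a - Nat.choose (sSup {k | Nat.choose k (d + 1) ≤ a}) (d + 1))

/-- An ideal is generated in degrees `≤ m` if it is generated by its homogeneous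
elements of degree `≤ m`. -/
def GeneratedInDegLE (I : Ideal (MvPolynomial (Fin (n + 1)) K)) (m : ℕ) : Prop :=
  I = Ideal.span {f | f ∈ I ∧ ∃ d ≤ m, f.IsHomogeneous d}


lemma tdeg_eq_degree (m : Term n) : tdeg m = m.degree := by
  refine (Finset.sum_subset (Finset.subset_univ _) ?_).symm
  exact fun i _ hi => Finsupp.notMem_support_iff.mp hi

lemma isHomogeneous_of_tdeg {p : MvPolynomial (Fin (n + 1)) K} {d : ℕ}
    (h : ∀ v ∈ p.support, tdeg v = d) : p.IsHomogeneous d := by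
  intro v hv
  rw [show (Finsupp.weight (1 : Fin (n + 1) → ℕ)) = Finsupp.weight (fun _ => 1) from rfl,
    ← Finsupp.degree_eq_weight_one]
  rw [← tdeg_eq_degree]
  exact h v (mem_support_iff.mpr hv)

lemma tdeg_of_mem_support {p : MvPolynomial (Fin (n + 1)) K} {d : ℕ}
    (hp : p.IsHomogeneous d) {v : Term n} (hv : v ∈ p.support) : tdeg v = d := by
  rw [tdeg_eq_degree, Finsupp.degree_eq_weight_one]
  exact hp (mem_support_iff.mp hv)

lemma mem_spanTerms_of_support {p : MvPolynomial (Fin (n + 1)) K} {S : Set (Term n)}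
    (h : ∀ v ∈ p.support, v ∈ S) : p ∈ spanTerms K S := by
  rw [p.as_sum]
  refine Submodule.sum_mem _ fun v hv => ?_
  have hm : monomial v (coeff v p) = coeff v p • monomial v (1 : K) := by
    rw [smul_monomial, smul_eq_mul, mul_one]
  rw [hm]
  exact Submodule.smul_mem _ _ (Submodule.subset_span ⟨v, h v hv, rfl⟩)

lemma zero_mem_of_orderIdeal {O : Set (Term n)} (hO : IsOrderIdeal O) : (0 : Term n) ∈ O := by
  obtain ⟨τ, hτ⟩ := hO.1
  exact hO.2 τ hτ 0 zero_le

lemma g_isHomogeneous {O : Set (Term n)} {g : Term n → MvPolynomial (Fin (n + 1)) K}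
    (hpre : IsPrebasis O g) {σ : Term n} (hσ : σ ∈ border O) :
    (g σ).IsHomogeneous (tdeg σ) := by
  have h1 : (monomial σ (1 : K)).IsHomogeneous (tdeg σ) :=
    isHomogeneous_monomial _ (tdeg_eq_degree σ).symm
  have h2 : (monomial σ (1 : K) - g σ).IsHomogeneous (tdeg σ) :=
    isHomogeneous_of_tdeg (fun v hv => (hpre σ hσ v hv).2)
  have hg : g σ = monomial σ (1 : K) - (monomial σ (1 : K) - g σ) := by ring
  rw [← mem_homogeneousSubmodule] at h1 h2 ⊢
  rw [hg]
  exact Submodule.sub_mem _ h1 h2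

lemma border_mem_sup {O : Set (Term n)} {g : Term n → MvPolynomial (Fin (n + 1)) K}
    (hpre : IsPrebasis O g) {σ : Term n} (hσ : σ ∈ border O) :
    monomial σ (1 : K) ∈ degPart (idealG O g) (tdeg σ) ⊔ spanTerms K (Od O (tdeg σ)) := by
  have hg : g σ ∈ idealG O g := Ideal.subset_span ⟨σ, hσ, rfl⟩
  have hsplit : monomial σ (1 : K) = g σ + (monomial σ (1 : K) - g σ) := by ring
  rw [hsplit]
  refine Submodule.add_mem_sup ?_ ?_
  · exact Submodule.mem_inf.mpr ⟨hg, (mem_homogeneousSubmodule _ _).mpr (g_isHomogeneous hpre hσ)⟩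
  · exact mem_spanTerms_of_support fun v hv => ⟨(hpre σ hσ v hv).1, (hpre σ hσ v hv).2⟩

lemma tdeg_add (a b : Term n) : tdeg (a + b) = tdeg a + tdeg b := by
  simp [tdeg, Finsupp.add_apply, Finset.sum_add_distrib]

lemma tdeg_single (r : Fin (n + 1)) : tdeg (Finsupp.single r 1) = 1 := by
  simp [tdeg, Finsupp.single_apply]

lemma term_mem_sup {O : Set (Term n)} (hO : IsOrderIdeal O)
    {g : Term n → MvPolynomial (Fin (n + 1)) K} (hpre : IsPrebasis O g) :
    ∀ d : ℕ, ∀ t : Term n, tdeg t = d →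
      monomial t (1 : K) ∈ degPart (idealG O g) d ⊔ spanTerms K (Od O d) := by
  intro d
  induction d using Nat.strong_induction_on with
  | _ d IH =>
  intro t ht
  by_cases htO : t ∈ O
  · exact Submodule.mem_sup_right (Submodule.subset_span ⟨t, ⟨htO, ht⟩, rfl⟩)
  · have ht0 : t ≠ 0 := fun h => htO (h ▸ zero_mem_of_orderIdeal hO)
    obtain ⟨r, hr⟩ : ∃ r, t r ≠ 0 := by
      by_contra h
      push_neg at h
      exact ht0 (Finsupp.ext fun i => h i)
    set t' := t - Finsupp.single r 1 with ht'def
    have htt : t' + Finsupp.single r 1 = t := by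
      ext i
      by_cases hi : i = r
      · subst hi
        simp only [ht'def, Finsupp.add_apply, Finsupp.tsub_apply, Finsupp.single_eq_same]
        omega
      · simp [ht'def, Finsupp.add_apply, Finsupp.tsub_apply, Finsupp.single_apply,
          (Ne.symm hi : r ≠ i)]
    have htd' : tdeg t' + 1 = d := by
      rw [← ht, ← htt, tdeg_add, tdeg_single]
    have hXmul : ∀ s : Term n, X r * monomial s (1 : K) = monomial (s + Finsupp.single r 1) (1 : K) := by
      intro s
      rw [X, monomial_mul, one_mul, add_comm (Finsupp.single r 1) s]
    by_cases ht'O : t' ∈ O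
    · have hb : t ∈ border O := ⟨htO, r, t', ht'O, htt.symm⟩
      exact ht ▸ border_mem_sup hpre hb
    · have hd1 : tdeg t' < d := by omega
      have IH' := IH (tdeg t') hd1 t' rfl
      rw [Submodule.mem_sup] at IH'
      obtain ⟨u, hu, v, hv, huv⟩ := IH'
      have hmul : monomial t (1 : K) = X r * u + X r * v := by
        rw [← mul_add, huv, hXmul, htt]
      have hu1 : X r * u ∈ degPart (idealG O g) d := by
        refine Submodule.mem_inf.mpr ⟨Ideal.mul_mem_left _ _ (Submodule.mem_inf.mp hu).1, ?_⟩
        rw [mem_homogeneousSubmodule]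
        have := (isHomogeneous_X K r).mul
          ((mem_homogeneousSubmodule _ _).mp (Submodule.mem_inf.mp hu).2)
        rwa [show 1 + tdeg t' = d by omega] at this
      have hv1 : X r * v ∈ degPart (idealG O g) d ⊔ spanTerms K (Od O d) := by
        refine Submodule.span_induction
          (p := fun x _ => X r * x ∈ degPart (idealG O g) d ⊔ spanTerms K (Od O d))
          ?_ ?_ ?_ ?_ hv
        · rintro _ ⟨τ, hτ, rfl⟩
          rw [hXmul]
          set s := τ + Finsupp.single r 1 with hs
          have hts : tdeg s = d := by
            rw [hs, tdeg_add, tdeg_single, hτ.2]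
            omega
          by_cases hsO : s ∈ O
          · exact Submodule.mem_sup_right (Submodule.subset_span ⟨s, ⟨hsO, hts⟩, rfl⟩)
          · exact hts ▸ border_mem_sup hpre ⟨hsO, r, τ, hτ.1, rfl⟩
        · simp
        · intro x y _ _ hx hy
          rw [mul_add]
          exact Submodule.add_mem _ hx hy
        · intro a x _ hx
          rw [mul_smul_comm]
          exact Submodule.smul_mem _ _ hx
      rw [hmul]
      exact Submodule.add_mem _ (Submodule.mem_sup_left hu1) hv1

lemma hom_le_sup {O : Set (Term n)} (hO : IsOrderIdeal O)
    {g : Term n → MvPolynomial (Fin (n + 1)) K} (hpre : IsPrebasis O g) (d : ℕ) :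
    homogeneousSubmodule (Fin (n + 1)) K d ≤ degPart (idealG O g) d ⊔ spanTerms K (Od O d) := by
  intro f hf
  rw [f.as_sum]
  refine Submodule.sum_mem _ fun v hv => ?_
  have hm : monomial v (coeff v f) = coeff v f • monomial v (1 : K) := by
    rw [smul_monomial, smul_eq_mul, mul_one]
  rw [hm]
  exact Submodule.smul_mem _ _
    (term_mem_sup hO hpre d v (tdeg_of_mem_support ((mem_homogeneousSubmodule _ _).mp hf) hv))

lemma spanTerms_le_hom {O : Set (Term n)} (d : ℕ) :
    spanTerms K (Od O d) ≤ homogeneousSubmodule (Fin (n + 1)) K d := by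
  rw [spanTerms, Submodule.span_le]
  rintro _ ⟨τ, hτ, rfl⟩
  rw [SetLike.mem_coe, mem_homogeneousSubmodule]
  exact isHomogeneous_monomial _ (by rw [← tdeg_eq_degree]; exact hτ.2)

/-- **A border basis generates.** If `G` is a homogeneous `∂𝒪`-basis of a homogeneous
ideal `J`, then `J_d = (G)_d` for every `d` and `J = (G)`. -/
theorem borderBasis_generates (O : Set (Term n)) (hO : IsOrderIdeal O)
    (g : Term n → MvPolynomial (Fin (n + 1)) K)
    (J : Ideal (MvPolynomial (Fin (n + 1)) K)) (hJ : IsHomogeneousIdeal J)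
    (hbasis : IsBorderBasisOf O g J) :
    (∀ d : ℕ, degPart J d = degPart (idealG O g) d) ∧ J = idealG O g := by
  obtain ⟨hpre, hgJ, hdec⟩ := hbasis
  have hGJ : idealG O g ≤ J := by
    rw [idealG, Ideal.span_le]
    rintro _ ⟨σ, hσ, rfl⟩
    exact hgJ σ hσ
  have hdeg : ∀ d : ℕ, degPart J d = degPart (idealG O g) d := by
    intro d
    apply le_antisymm
    · intro f hf
      obtain ⟨hfJ, hfh⟩ := Submodule.mem_inf.mp hf
      have hsup := hom_le_sup hO hpre d hfh
      rw [Submodule.mem_sup] at hsup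
      obtain ⟨u, hu, v, hv, huv⟩ := hsup
      have hvd : v = f - u := by rw [← huv]; ring
      have hvJ : v ∈ degPart J d := by
        refine Submodule.mem_inf.mpr ⟨?_, spanTerms_le_hom d hv⟩
        rw [hvd]
        exact Submodule.sub_mem _ hfJ (hGJ (Submodule.mem_inf.mp hu).1)
      have hv0 : v = 0 := Submodule.disjoint_def.mp (hdec d).2 v hvJ hv
      have hfu : f = u := by rw [← huv, hv0, add_zero]
      rw [hfu]
      exact hu
    · intro f hf
      obtain ⟨hf1, hf2⟩ := Submodule.mem_inf.mp hf
      exact Submodule.mem_inf.mpr ⟨hGJ hf1, hf2⟩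
  refine ⟨hdeg, le_antisymm ?_ hGJ⟩
  intro f hf
  have hsum := f.sum_homogeneousComponent
  rw [← hsum]
  refine Submodule.sum_mem _ fun i _ => ?_
  have hmem : homogeneousComponent i f ∈ degPart J i :=
    Submodule.mem_inf.mpr ⟨hJ f hf i,
      (mem_homogeneousSubmodule _ _).mpr (homogeneousComponent_isHomogeneous i f)⟩
  rw [hdeg i] at hmem
  exact (Submodule.mem_inf.mp hmem).1


end Border
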